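/- arXiv:1810.00824 — 2 statements merged into one kernel-verified Lean document; each statement's English description precedes it below -/
import Mathlib

section
/- Let k be an algebraically closed field of characteristic zero, G a finite group acting faithfully and regularly on an irreducible affine variety X with dim X > 0. Then every finite-dimensional kG-module M is isomorphic to a kG-submodule of the coordinate ring k[X]. -/
set_option linter.unusedSectionVars false
set_option maxHeartbeats 1000000

section Aux

variable {k A : Type*} [Field k] [IsAlgClosed k] [CommRing A] [IsDomain A]
  [Algebra k A] [Algebra.FiniteType k A]

/-- Two `k`-algebra homomorphisms `A → k` with nested kernels are equal. -/
lemma aux_hom_eq_of_ker_le {ψ ψ' : A →ₐ[k] k}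
    (h : ∀ a, ψ a = 0 → ψ' a = 0) : ψ' = ψ := by
  ext a
  have h0 : ψ (a - algebraMap k A (ψ a)) = 0 := by simp
  have h1 := h _ h0
  rw [map_sub, AlgHom.commutes, sub_eq_zero] at h1
  exact h1

/-- Weak Nullstellensatz style: any nonzero element of a finitely generated
domain over an algebraically closed field is nonvanishing at some `k`-point. -/
lemma aux_exists_eval {b : A} (hb : b ≠ 0) : ∃ ε : A →ₐ[k] k, ε b ≠ 0 := by
  haveI : IsJacobsonRing A := isJacobsonRing_of_finiteType (A := k)
  have hjac : Ideal.jacobson (⊥ : Ideal A) = ⊥ := by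
    rw [← Ideal.radical_eq_jacobson, Ideal.radical_bot_of_noZeroDivisors]
  have hbmem : b ∉ Ideal.jacobson (⊥ : Ideal A) := by
    rw [hjac]; simpa using hb
  rw [Ideal.jacobson, Ideal.mem_sInf] at hbmem
  push_neg at hbmem
  obtain ⟨m, ⟨-, hm⟩, hbm⟩ := hbmem
  haveI : m.IsMaximal := hm
  haveI : Algebra.FiniteType k (A ⧸ m) :=
    Algebra.FiniteType.of_surjective (Ideal.Quotient.mkₐ k m)
      Ideal.Quotient.mk_surjective
  letI : Field (A ⧸ m) := Ideal.Quotient.field m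
  haveI : Module.Finite k (A ⧸ m) := finite_of_finite_type_of_isJacobsonRing k (A ⧸ m)
  have hsurj : Function.Surjective (algebraMap k (A ⧸ m)) :=
    IsAlgClosed.algebraMap_bijective_of_isIntegral.2
  have hbij : Function.Bijective (Algebra.ofId k (A ⧸ m)) :=
    ⟨fun x y hxy => (algebraMap k (A ⧸ m)).injective hxy, hsurj⟩
  let e := AlgEquiv.ofBijective (Algebra.ofId k (A ⧸ m)) hbij
  refine ⟨(e.symm.toAlgHom).comp (Ideal.Quotient.mkₐ k m), ?_⟩
  intro h0
  apply hbm
  have : (Ideal.Quotient.mkₐ k m) b = 0 := by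
    have := congrArg e h0
    simpa using this
  rwa [Ideal.Quotient.mkₐ_eq_mk, Ideal.Quotient.eq_zero_iff_mem] at this

/-- If `A` contains a transcendental element, every `k`-algebra hom `A → k`
has a nonzero element in its kernel. -/
lemma aux_exists_ker {a0 : A} (ha0 : Transcendental k a0) (ψ : A →ₐ[k] k) :
    ∃ c : A, c ≠ 0 ∧ ψ c = 0 := by
  refine ⟨a0 - algebraMap k A (ψ a0), ?_, by simp⟩
  intro h
  rw [sub_eq_zero] at h
  exact ha0 (h ▸ isAlgebraic_algebraMap (ψ a0))

/-- CRT: an injective finite family of `k`-algebra homs `A → k` gives a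
surjection `A → (J → k)`. -/
lemma aux_crt {J : Type*} [Fintype J] [DecidableEq J] (Ψ : J → (A →ₐ[k] k))
    (hΨ : Function.Injective Ψ) :
    Function.Surjective (fun a : A => (fun j => Ψ j a : J → k)) := by
  have key : ∀ j j' : J, ∃ x : A, (j ≠ j' → Ψ j' x = 0) ∧ Ψ j x ≠ 0 := by
    intro j j'
    by_cases hjj : j = j'
    · exact ⟨1, fun h => absurd hjj h, by simp⟩
    · by_contra hcon
      push_neg at hcon
      have : Ψ j = Ψ j' := aux_hom_eq_of_ker_le (fun a ha => hcon a (fun _ => ha))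
      exact hjj (hΨ this)
  choose x hx0 hx1 using key
  set e : J → A := fun j => ∏ j' ∈ Finset.univ.erase j, (Ψ j (x j j'))⁻¹ • x j j' with he
  have he1 : ∀ j, Ψ j (e j) = 1 := by
    intro j
    rw [he]
    simp only [map_prod, map_smul, smul_eq_mul]
    exact Finset.prod_eq_one fun j' _ => inv_mul_cancel₀ (hx1 j j')
  have he0 : ∀ j j'' : J, j'' ≠ j → Ψ j'' (e j) = 0 := by
    intro j j'' hne
    rw [he]
    simp only [map_prod, map_smul, smul_eq_mul]
    refine Finset.prod_eq_zero (Finset.mem_erase.2 ⟨hne, Finset.mem_univ _⟩) ?_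
    rw [hx0 j j'' (Ne.symm hne), mul_zero]
  intro f
  refine ⟨∑ j, f j • e j, ?_⟩
  funext j''
  simp only [map_sum, map_smul, smul_eq_mul]
  rw [Finset.sum_eq_single j'']
  · rw [he1, mul_one]
  · intro j _ hj
    rw [he0 j j'' (Ne.symm hj), mul_zero]
  · intro h; exact absurd (Finset.mem_univ j'') h

end Aux

section Grp

variable {k A G : Type*} [Field k] [IsAlgClosed k] [CommRing A] [IsDomain A]
  [Algebra k A] [Algebra.FiniteType k A]
  [Group G] [Finite G] [MulSemiringAction G A] [SMulCommClass G k A] [FaithfulSMul G A]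

local notation "ρ" => MulSemiringAction.toAlgHom k A

lemma aux_comp_comp (ψ : A →ₐ[k] k) (x y : G) :
    (ψ.comp (ρ x)).comp (ρ y) = ψ.comp (ρ (x * y)) := by
  ext a; simp [mul_smul]

lemma aux_comp_one (ψ : A →ₐ[k] k) : ψ.comp (ρ (1 : G)) = ψ := by
  ext a; simp

/-- Given any finite set `T` of algebra homs, there is a `k`-point `ε` whose
`G`-orbit is free and avoids the orbits of the points in `T`. -/
lemma aux_new {a0 : A} (ha0 : Transcendental k a0) (T : Finset (A →ₐ[k] k)) :
    ∃ ε : A →ₐ[k] k, (∀ h : G, h ≠ 1 → ε.comp (ρ h) ≠ ε) ∧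
      ∀ ψ ∈ T, ∀ h : G, ε ≠ ψ.comp (ρ h) := by
  haveI := Fintype.ofFinite G
  classical
  have hfa : ∀ h : G, h ≠ 1 → ∃ a : A, h • a ≠ a := by
    intro h h1
    by_contra hc
    push_neg at hc
    exact h1 (eq_of_smul_eq_smul fun a : A => by rw [hc a, one_smul])
  have hd : ∀ h : G, ∃ d : A, d ≠ 0 ∧
      (h ≠ 1 → ∀ ε : A →ₐ[k] k, ε d ≠ 0 → ε.comp (ρ h) ≠ ε) := by
    intro h
    by_cases h1 : h = 1
    · exact ⟨1, one_ne_zero, fun hh => absurd h1 hh⟩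
    · obtain ⟨a, ha⟩ := hfa h h1
      refine ⟨h • a - a, sub_ne_zero.mpr ha, fun _ ε hεd hcomp => hεd ?_⟩
      have h2 : ε (h • a) = ε a := by
        have := DFunLike.congr_fun hcomp a
        simpa using this
      rw [map_sub, h2, sub_self]
  choose d hd0 hd1 using hd
  have hc : ∀ (ψ : A →ₐ[k] k) (h : G), ∃ c : A, c ≠ 0 ∧ ψ (h • c) = 0 := by
    intro ψ h
    obtain ⟨c, hc0, hcz⟩ := aux_exists_ker ha0 ((ψ.comp (ρ h) : A →ₐ[k] k))
    exact ⟨c, hc0, by simpa using hcz⟩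
  choose c hcne hczero using hc
  have hb : ((∏ h : G, d h) * ∏ ψ ∈ T, ∏ h : G, c ψ h) ≠ 0 := by
    refine mul_ne_zero ?_ ?_
    · exact Finset.prod_ne_zero_iff.2 fun h _ => hd0 h
    · exact Finset.prod_ne_zero_iff.2 fun ψ _ =>
        Finset.prod_ne_zero_iff.2 fun h _ => hcne ψ h
  obtain ⟨ε, hεb⟩ := aux_exists_eval (k := k) hb
  rw [map_mul, map_prod, map_prod] at hεb
  have hεb1 := mul_ne_zero_iff.1 hεb
  have hεd : ∀ h : G, ε (d h) ≠ 0 := fun h =>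
    Finset.prod_ne_zero_iff.1 hεb1.1 h (Finset.mem_univ h)
  have hεc : ∀ ψ ∈ T, ∀ h : G, ε (c ψ h) ≠ 0 := by
    intro ψ hψ h
    have := Finset.prod_ne_zero_iff.1 hεb1.2 ψ hψ
    rw [map_prod] at this
    exact Finset.prod_ne_zero_iff.1 this h (Finset.mem_univ h)
  refine ⟨ε, fun h h1 => hd1 h h1 ε (hεd h), fun ψ hψ h heq => hεc ψ hψ h ?_⟩
  rw [heq]
  show ψ (h • c ψ h) = 0
  exact hczero ψ h

/-- Selection of `n` points of `Spec A` with pairwise disjoint free `G`-orbits,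
in the guise of algebra homomorphisms. -/
lemma aux_select {a0 : A} (ha0 : Transcendental k a0) (n : ℕ) :
    ∃ ε : Fin n → (A →ₐ[k] k),
      Function.Injective (fun p : G × Fin n => (ε p.2).comp (ρ p.1⁻¹)) := by
  induction n with
  | zero => exact ⟨fun i => i.elim0, fun p => p.2.elim0⟩
  | succ n ih =>
    obtain ⟨ε, hε⟩ := ih
    classical
    haveI := Fintype.ofFinite G
    obtain ⟨ν, hν1, hν2⟩ := aux_new (G := G) ha0 (Finset.image ε Finset.univ)
    refine ⟨Fin.snoc ε ν, ?_⟩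
    have hkey : ∀ (ψ ψ' : A →ₐ[k] k) (g g' : G),
        ψ.comp (ρ g⁻¹) = ψ'.comp (ρ g'⁻¹) → ψ = ψ'.comp (ρ (g'⁻¹ * g)) := by
      intro ψ ψ' g g' hcomp
      have := congrArg (fun θ : A →ₐ[k] k => θ.comp (ρ g)) hcomp
      simpa [aux_comp_comp, aux_comp_one] using this
    rintro ⟨g, i⟩ ⟨g', i'⟩ hgi
    simp only at hgi
    rcases Fin.eq_castSucc_or_eq_last i with ⟨j, rfl⟩ | rfl <;>
      rcases Fin.eq_castSucc_or_eq_last i' with ⟨j', rfl⟩ | rfl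
    · rw [Fin.snoc_castSucc, Fin.snoc_castSucc] at hgi
      have := hε (a₁ := (g, j)) (a₂ := (g', j')) hgi
      rw [Prod.ext_iff] at this ⊢
      exact ⟨this.1, congrArg Fin.castSucc this.2⟩
    · rw [Fin.snoc_castSucc, Fin.snoc_last] at hgi
      exact absurd (hkey ν (ε j) g' g (hgi.symm))
        (hν2 (ε j) (Finset.mem_image_of_mem ε (Finset.mem_univ j)) _)
    · rw [Fin.snoc_castSucc, Fin.snoc_last] at hgi
      exact absurd (hkey ν (ε j') g g' hgi)
        (hν2 (ε j') (Finset.mem_image_of_mem ε (Finset.mem_univ j')) _)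
    · rw [Fin.snoc_last] at hgi
      by_cases hgg : g = g'
      · rw [hgg]
      · exfalso
        have h1 : ν = ν.comp (ρ (g'⁻¹ * g)) := hkey ν ν g g' hgi
        have h2 : g'⁻¹ * g ≠ 1 := by
          intro hcon
          exact hgg (by rwa [inv_mul_eq_one, eq_comm] at hcon)
        exact hν1 (g'⁻¹ * g) h2 h1.symm

end Grp

/-- If a finite group `G` acts faithfully and regularly on an irreducible affine variety
`X` of positive dimension (encoded: `A = k[X]` is a finitely generated domain over the
algebraically closed field `k` of characteristic zero with a transcendental element, on
which `G` acts faithfully by `k`-algebra automorphisms), then every finite-dimensional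
`kG`-module `M` embeds `G`-equivariantly and `k`-linearly into `A = k[X]`. -/
theorem stmt_8 {k A G M : Type*} [Field k] [IsAlgClosed k] [CharZero k]
    [CommRing A] [IsDomain A] [Algebra k A] [Algebra.FiniteType k A]
    [Group G] [Finite G] [MulSemiringAction G A] [SMulCommClass G k A] [FaithfulSMul G A]
    (hdim : ∃ a : A, Transcendental k a)
    [AddCommGroup M] [Module k M] [DistribMulAction G M] [SMulCommClass G k M]
    [FiniteDimensional k M] :
    ∃ φ : M →ₗ[k] A, Function.Injective φ ∧ ∀ (g : G) (m : M), φ (g • m) = g • φ m := by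
  classical
  haveI := Fintype.ofFinite G
  obtain ⟨a0, ha0⟩ := hdim
  set N := Module.finrank k M with hN
  let bM : Module.Basis (Fin N) k M := Module.finBasis k M
  obtain ⟨ε, hε⟩ := aux_select (G := G) ha0 N
  set Ψ : G × Fin N → (A →ₐ[k] k) :=
    fun p => (ε p.2).comp (MulSemiringAction.toAlgHom k A p.1⁻¹) with hΨdef
  have hΨinj : Function.Injective Ψ := hε
  -- the evaluation map π
  let π : A →ₗ[k] (G × Fin N → k) := LinearMap.pi fun j => (Ψ j).toLinearMap
  have hπapp : ∀ (a : A) (j : G × Fin N), π a j = Ψ j a := fun a j => rfl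
  have hπsurj : Function.Surjective π := by
    intro f
    obtain ⟨a, ha⟩ := aux_crt Ψ hΨinj f
    exact ⟨a, by funext j; rw [hπapp]; exact congrFun ha j⟩
  -- equivariance of π
  have hπeq : ∀ (h : G) (a : A) (g : G) (i : Fin N),
      π (h • a) (g, i) = π a (h⁻¹ * g, i) := by
    intro h a g i
    rw [hπapp, hπapp, hΨdef]
    show (ε i) (g⁻¹ • h • a) = (ε i) ((h⁻¹ * g)⁻¹ • a)
    rw [mul_inv_rev, inv_inv, ← mul_smul]
  -- a linear section
  obtain ⟨σ0, hσ0⟩ := π.exists_rightInverse_of_surjective (LinearMap.range_eq_top.2 hπsurj)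
  have hsec : ∀ v, π (σ0 v) = v := fun v => by
    have := DFunLike.congr_fun hσ0 v
    simpa using this
  -- averaging
  set cG : k := (Fintype.card G : k) with hcGdef
  have hcG : cG ≠ 0 := Nat.cast_ne_zero.mpr Fintype.card_ne_zero
  let σ : (G × Fin N → k) →ₗ[k] A :=
    cG⁻¹ • ∑ g : G, (DistribMulAction.toLinearMap k A g) ∘ₗ σ0 ∘ₗ
      (LinearMap.funLeft k k (fun p : G × Fin N => (g * p.1, p.2)))
  have hσ : ∀ w : G × Fin N → k,
      σ w = cG⁻¹ • ∑ g : G, g • σ0 (fun p => w (g * p.1, p.2)) := by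
    intro w
    simp only [σ, LinearMap.smul_apply, LinearMap.coe_sum, Finset.sum_apply,
      LinearMap.comp_apply, LinearMap.funLeft_apply, DistribSMul.toLinearMap_apply]
    rfl
  -- π ∘ σ = id
  have hπσ : ∀ w, π (σ w) = w := by
    intro w
    rw [hσ, map_smul, map_sum]
    have hterm : ∀ g : G, π (g • σ0 (fun p => w (g * p.1, p.2))) = w := by
      intro g
      funext j
      obtain ⟨g', i⟩ := j
      rw [hπeq g _ g' i, hsec]
      show w (g * (g⁻¹ * g'), i) = w (g', i)
      rw [mul_inv_cancel_left]
    rw [Finset.sum_congr rfl fun g _ => hterm g]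
    rw [Finset.sum_const, Finset.card_univ, ← Nat.cast_smul_eq_nsmul k, smul_smul,
      inv_mul_cancel₀ hcG, one_smul]
  have hσinj : Function.Injective σ := by
    intro w w' hww
    rw [← hπσ w, ← hπσ w', hww]
  -- equivariance of σ
  have hσeq : ∀ (h : G) (w : G × Fin N → k),
      σ (fun p => w (h⁻¹ * p.1, p.2)) = h • σ w := by
    intro h w
    rw [hσ, hσ, smul_comm h cG⁻¹]
    congr 1
    rw [Finset.smul_sum]
    refine Fintype.sum_equiv (Equiv.mulLeft h⁻¹) _ _ ?_
    intro g
    show g • σ0 (fun p => w (h⁻¹ * (g * p.1), p.2)) =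
      h • (h⁻¹ * g) • σ0 (fun p => w ((h⁻¹ * g) * p.1, p.2))
    rw [← mul_smul, mul_inv_cancel_left]
    congr 2
    funext p
    rw [mul_assoc]
  -- the embedding ι of M into functions
  let ι : M →ₗ[k] (G × Fin N → k) :=
    { toFun := fun m p => bM.repr (p.1⁻¹ • m) p.2
      map_add' := fun m m' => by
        funext p
        simp [smul_add]
      map_smul' := fun cc m => by
        funext p
        simp [smul_comm p.1⁻¹ cc m] }
  have hιapp : ∀ (m : M) (p : G × Fin N), ι m p = bM.repr (p.1⁻¹ • m) p.2 :=
    fun m p => rfl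
  have hιinj : Function.Injective ι := by
    intro m m' hmm
    have hr : bM.repr m = bM.repr m' := by
      ext i
      have := congrFun hmm (1, i)
      simpa [hιapp] using this
    exact bM.repr.injective hr
  have hιeq : ∀ (h : G) (m : M), ι (h • m) = fun p => ι m (h⁻¹ * p.1, p.2) := by
    intro h m
    funext p
    rw [hιapp, hιapp]
    show bM.repr (p.1⁻¹ • h • m) p.2 = bM.repr ((h⁻¹ * p.1)⁻¹ • m) p.2
    rw [mul_inv_rev, inv_inv, ← mul_smul]
  refine ⟨σ ∘ₗ ι, ?_, ?_⟩
  · exact fun m m' hmm => hιinj (hσinj hmm)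
  · intro g m
    show σ (ι (g • m)) = g • σ (ι m)
    rw [hιeq, hσeq]
end

section
/- Let P be a Jordan group with Jordan constant J_P, and let Q₁, ..., Q_s be groups each containing a non-abelian finite subgroup. If s > log₂(J_P), then there is no injective group homomorphism Q₁ × ⋯ × Q_s → P. -/
/-- `mConst H` is the minimal index of a normal abelian subgroup of `H`. -/
noncomputable def mConst (H : Type*) [Group H] : ℕ :=
  sInf {n : ℕ | ∃ S : Subgroup H, S.Normal ∧ (∀ a ∈ S, ∀ b ∈ S, a * b = b * a) ∧
    S.index = n}

/-- The Jordan constant `J_G` of a group `G`: the supremum of `mConst F` over all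
finite subgroups `F` of `G`. `G` is Jordan iff `jordanConst G < ∞`. -/
noncomputable def jordanConst (G : Type*) [Group G] : ℕ∞ :=
  ⨆ (F : Subgroup G) (_ : Finite F), (mConst F : ℕ∞)

/-- general version of `Subgroup.index_pi` for a family of groups -/
lemma index_pi' {ι : Type*} [Fintype ι] {β : ι → Type*} [∀ i, Group (β i)]
    (H : ∀ i, Subgroup (β i)) :
    (Subgroup.pi Set.univ H).index = ∏ i, (H i).index := by
  simp_rw [Subgroup.index, ← Nat.card_pi]
  refine Nat.card_congr
    ((Quotient.congrRight (fun x y ↦ ?_)).trans (Setoid.piQuotientEquiv _).symm)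
  rw [QuotientGroup.leftRel_pi]

/-- `mConst` is invariant under group isomorphism (one inequality). -/
lemma mConst_le_of_equiv {H H' : Type*} [Group H] [Group H'] (e : H ≃* H') :
    mConst H' ≤ mConst H := by
  have hsub : {n : ℕ | ∃ S : Subgroup H, S.Normal ∧ (∀ a ∈ S, ∀ b ∈ S, a * b = b * a) ∧
      S.index = n} ⊆ {n : ℕ | ∃ S : Subgroup H', S.Normal ∧
      (∀ a ∈ S, ∀ b ∈ S, a * b = b * a) ∧ S.index = n} := by
    rintro n ⟨S, hN, hab, hidx⟩
    refine ⟨S.map e.toMonoidHom, hN.map _ e.surjective, ?_, ?_⟩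
    · rintro a ⟨x, hx, rfl⟩ b ⟨y, hy, rfl⟩
      rw [← map_mul, ← map_mul, hab x hx y hy]
    · rw [Subgroup.index_map_eq _ e.surjective
        (((MonoidHom.ker_eq_bot_iff (e : H →* H')).mpr (by exact e.injective)) ▸ bot_le)]
      exact hidx
  have hne : {n : ℕ | ∃ S : Subgroup H, S.Normal ∧ (∀ a ∈ S, ∀ b ∈ S, a * b = b * a) ∧
      S.index = n}.Nonempty := ⟨(⊥ : Subgroup H).index, ⊥, inferInstance, by simp, rfl⟩
  exact Nat.sInf_le (hsub (Nat.sInf_mem hne))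

lemma mConst_eq_of_equiv {H H' : Type*} [Group H] [Group H'] (e : H ≃* H') :
    mConst H = mConst H' :=
  le_antisymm (mConst_le_of_equiv e.symm) (mConst_le_of_equiv e)

/-- every normal abelian subgroup of a finite product of finite non-abelian groups
has index at least `2^s` -/
lemma two_pow_le_mConst_pi {s : ℕ} (B : Fin s → Type*) [∀ i, Group (B i)]
    [∀ i, Finite (B i)] (hB : ∀ i, ¬ ∀ a b : B i, a * b = b * a) :
    2 ^ s ≤ mConst (∀ i, B i) := by
  have hne : {n : ℕ | ∃ S : Subgroup (∀ i, B i), S.Normal ∧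
      (∀ a ∈ S, ∀ b ∈ S, a * b = b * a) ∧ S.index = n}.Nonempty :=
    ⟨(⊥ : Subgroup (∀ i, B i)).index, ⊥, inferInstance, by simp, rfl⟩
  obtain ⟨S, hN, hab, hidx⟩ := Nat.sInf_mem hne
  rw [mConst, ← hidx]
  -- project S to each factor
  set T : ∀ i, Subgroup (B i) := fun i => S.map (Pi.evalMonoidHom B i) with hT
  have hsurj : ∀ i, Function.Surjective (Pi.evalMonoidHom B i) := by
    intro i b
    exact ⟨Pi.mulSingle i b, by simp⟩
  have hTne : ∀ i, T i ≠ ⊤ := by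
    intro i htop
    refine hB i (fun a b => ?_)
    have ha : (a : B i) ∈ T i := htop ▸ Subgroup.mem_top _
    have hb : (b : B i) ∈ T i := htop ▸ Subgroup.mem_top _
    obtain ⟨x, hx, rfl⟩ := ha
    obtain ⟨y, hy, rfl⟩ := hb
    rw [← map_mul, ← map_mul, hab x hx y hy]
  have hTidx : ∀ i, 2 ≤ (T i).index := by
    intro i
    have h0 : (T i).index ≠ 0 := Subgroup.index_ne_zero_of_finite
    have h1 : (T i).index ≠ 1 := fun h => hTne i (Subgroup.index_eq_one.mp h)
    omega
  have hle : S ≤ Subgroup.pi Set.univ T := by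
    intro x hx i _
    exact ⟨x, hx, rfl⟩
  have hdvd : (Subgroup.pi Set.univ T).index ∣ S.index := Subgroup.index_dvd_of_le hle
  have hS0 : S.index ≠ 0 := Subgroup.index_ne_zero_of_finite
  calc 2 ^ s = ∏ _i : Fin s, 2 := by simp
    _ ≤ ∏ i, (T i).index := Finset.prod_le_prod' (fun i _ => hTidx i)
    _ = (Subgroup.pi Set.univ T).index := (index_pi' T).symm
    _ ≤ S.index := Nat.le_of_dvd (Nat.pos_of_ne_zero hS0) hdvd

/-- the subgroup `Subgroup.pi Set.univ F` is isomorphic to the product of the `F i` -/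
noncomputable def piSubgroupEquiv {s : ℕ} {Q : Fin s → Type*} [∀ i, Group (Q i)]
    (F : ∀ i, Subgroup (Q i)) :
    (Subgroup.pi Set.univ F) ≃* (∀ i, F i) where
  toFun x i := ⟨x.1 i, x.2 i (Set.mem_univ i)⟩
  invFun f := ⟨fun i => f i, fun i _ => (f i).2⟩
  left_inv x := rfl
  right_inv f := rfl
  map_mul' x y := rfl

/-- Let `P` be a Jordan group with Jordan constant `J_P`, and let `Q₁, ..., Q_s` each
contain a non-abelian finite subgroup. If `s > log₂ J_P` (equivalently `J_P < 2^s`),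
then there is no injective group homomorphism `Q₁ × ⋯ × Q_s → P`. -/
theorem stmt_14 {P : Type*} [Group P] {s : ℕ} (Q : Fin s → Type*) [∀ i, Group (Q i)]
    (hJordan : jordanConst P ≠ ⊤)
    (hQ : ∀ i, ∃ F : Subgroup (Q i), Finite F ∧ ¬ ∀ a b : F, a * b = b * a)
    (hs : jordanConst P < (2 : ℕ∞) ^ s) :
    ¬ ∃ φ : (∀ i, Q i) →* P, Function.Injective φ := by
  rintro ⟨φ, hφ⟩
  choose F hFfin hFna using hQ
  haveI : ∀ i, Finite (F i) := hFfin
  set K : Subgroup (∀ i, Q i) := Subgroup.pi Set.univ F with hK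
  haveI : Finite K := Finite.of_equiv _ (piSubgroupEquiv F).symm.toEquiv
  set G : Subgroup P := K.map φ with hG
  haveI : Finite G := Finite.of_equiv _ (K.equivMapOfInjective φ hφ).toEquiv
  have hiso : mConst G = mConst (∀ i, F i) := by
    rw [← mConst_eq_of_equiv (K.equivMapOfInjective φ hφ),
        mConst_eq_of_equiv (piSubgroupEquiv F)]
  have hlow : 2 ^ s ≤ mConst G := hiso ▸ two_pow_le_mConst_pi (fun i => F i) hFna
  have hup : (mConst G : ℕ∞) ≤ jordanConst P := by
    exact le_iSup_of_le G (le_iSup_of_le ‹Finite G› le_rfl)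
  have : ((2 ^ s : ℕ) : ℕ∞) < (2 : ℕ∞) ^ s := by
    calc ((2 ^ s : ℕ) : ℕ∞) ≤ (mConst G : ℕ∞) := by exact_mod_cast hlow
      _ ≤ jordanConst P := hup
      _ < (2 : ℕ∞) ^ s := hs
  exact absurd this (by push_cast; simp)
end
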